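/- Stability of the endemic equilibrium (Proposition 4, second part): Assume A is irreducible, s(BA − Γ) > 0, and c_i ≥ 2 for every i ∈ {1,…,n}. Let x̄ be the unique vector with 0 < x̄_i ≤ 1/c_i for all i satisfying β_i (1 − c_i x̄_i)(1 − x̄_i) ∑_{j=1}^n A_{ij} x̄_j = γ_i x̄_i for all i. Then x̄ is asymptotically stable for the controlled SIS system with domain of attraction K' = ∏_{i=1}^n (0, 1/c_i]; that is, (i) for every ε > 0 there exists δ > 0 such that every solution with x(0) ∈ K' and ‖x(0) − x̄‖ < δ satisfies ‖x(t) − x̄‖ < ε for all t ≥ 0, and (ii) every solution with x(0) ∈ K' satisfies x(t) ∈ K' for all t ≥ 0 and x(t) → x̄ as t → ∞. -/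

import Mathlib

set_option maxHeartbeats 1000000

open Matrix Filter Topology

/-- Spectral abscissa: the maximum of the real parts of the complex eigenvalues. -/
noncomputable def specAbs {n : ℕ} (M : Matrix (Fin n) (Fin n) ℝ) : ℝ :=
  sSup (Complex.re '' spectrum ℂ (M.map (Complex.ofReal ·)))

/-- Irreducibility of a matrix. -/
def MatIrreducible {n : ℕ} (A : Matrix (Fin n) (Fin n) ℝ) : Prop :=
  ∀ S : Set (Fin n), S.Nonempty → S ≠ Set.univ → ∃ i ∈ S, ∃ j ∉ S, 0 < A i j

/-- The controlled SIS vector field. -/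
def sisF {n : ℕ} (A : Matrix (Fin n) (Fin n) ℝ) (β γ c : Fin n → ℝ)
    (x : Fin n → ℝ) (i : Fin n) : ℝ :=
  β i * (1 - c i * x i) * (1 - x i) * (∑ j, A i j * x j) - γ i * x i

/-- A solution of the controlled SIS system. -/
def IsSol {n : ℕ} (A : Matrix (Fin n) (Fin n) ℝ) (β γ c : Fin n → ℝ)
    (x : ℝ → Fin n → ℝ) : Prop :=
  ∀ t : ℝ, 0 ≤ t → HasDerivWithinAt x (sisF A β γ c (x t)) (Set.Ici 0) t

open Set in
lemma barrier {ι : Type*} [Fintype ι] {a b : ℝ}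
    (f g : ι → ℝ → ℝ) (B B' : ℝ → ℝ)
    (hf : ∀ i, ContinuousOn (f i) (Set.Icc a b))
    (hf' : ∀ i, ∀ t ∈ Set.Ico a b, HasDerivWithinAt (f i) (g i t) (Set.Ici t) t)
    (hB : ContinuousOn B (Set.Icc a b))
    (hB' : ∀ t ∈ Set.Ico a b, HasDerivWithinAt B (B' t) (Set.Ici t) t)
    (h0 : ∀ i, f i a ≤ B a)
    (hc : ∀ t ∈ Set.Ico a b, (∀ j, f j t ≤ B t) → ∀ i, f i t = B t → g i t < B' t) :
    ∀ t ∈ Set.Icc a b, ∀ i, f i t ≤ B t := by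
  by_contra hbad
  push_neg at hbad
  set bad : Set ℝ := {t | t ∈ Set.Icc a b ∧ ∃ i, B t < f i t} with hbadset
  have hbadne : bad.Nonempty := by
    obtain ⟨t, ht, i, hi⟩ := hbad
    exact ⟨t, ht, i, hi⟩
  have hbdd : BddBelow bad := ⟨a, fun t ht => ht.1.1⟩
  set t0 := sInf bad with ht0def
  have ht0a : a ≤ t0 := le_csInf hbadne (fun t ht => ht.1.1)
  have ht0b : t0 ≤ b := by
    obtain ⟨t, ht⟩ := hbadne
    exact le_trans (csInf_le hbdd ht) ht.1.2
  have ht0mem : t0 ∈ Set.Icc a b := ⟨ht0a, ht0b⟩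
  -- no bad points strictly before t0
  have hgood : ∀ t ∈ Set.Ico a t0, ∀ i, f i t ≤ B t := by
    intro t ht i
    by_contra hlt
    push_neg at hlt
    have : t ∈ bad := ⟨⟨ht.1, le_trans (le_of_lt ht.2) ht0b⟩, i, hlt⟩
    exact absurd (csInf_le hbdd this) (not_le.2 ht.2)
  -- f i t0 ≤ B t0
  have ht0good : ∀ i, f i t0 ≤ B t0 := by
    intro i
    rcases eq_or_lt_of_le ht0a with h | h
    · rw [← h]; exact h0 i
    · have hne : NeBot (𝓝[Set.Ico a t0] t0) := by
        rw [← mem_closure_iff_nhdsWithin_neBot, closure_Ico (ne_of_lt h)]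
        exact ⟨ht0a, le_refl t0⟩
      have hsub : Set.Ico a t0 ⊆ Set.Icc a b := fun z hz => ⟨hz.1, le_trans (le_of_lt hz.2) ht0b⟩
      have h1 : Tendsto (f i) (𝓝[Set.Ico a t0] t0) (𝓝 (f i t0)) :=
        ((hf i).continuousWithinAt ht0mem).mono hsub
      have h2 : Tendsto B (𝓝[Set.Ico a t0] t0) (𝓝 (B t0)) :=
        (hB.continuousWithinAt ht0mem).mono hsub
      refine le_of_tendsto_of_tendsto h1 h2 ?_
      filter_upwards [self_mem_nhdsWithin] with z hz using hgood z hz i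
  -- t0 itself is not bad
  have ht0notbad : t0 ∉ bad := by
    rintro ⟨-, i, hi⟩
    exact absurd (ht0good i) (not_le.2 hi)
  -- t0 < b
  have ht0ltb : t0 < b := by
    rcases eq_or_lt_of_le ht0b with h | h
    · exfalso
      obtain ⟨t, ht⟩ := hbadne
      have h1 : t0 ≤ t := csInf_le hbdd ht
      have h2 : t ≤ b := ht.1.2
      have : t = t0 := le_antisymm (h ▸ h2) h1
      exact ht0notbad (this ▸ ht)
    · exact h
  have ht0Ico : t0 ∈ Set.Ico a b := ⟨ht0a, ht0ltb⟩
  -- eventually after t0, all constraints strictly hold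
  have hev : ∀ᶠ z in 𝓝[>] t0, ∀ i, f i z < B z := by
    rw [eventually_all]
    intro i
    have hsub2 : Set.Ioc t0 b ⊆ Set.Icc a b := fun z hz => ⟨le_trans ht0a (le_of_lt hz.1), hz.2⟩
    have hBt : Tendsto B (𝓝[>] t0) (𝓝 (B t0)) := by
      have h' : Tendsto B (𝓝[Set.Ioc t0 b] t0) (𝓝 (B t0)) :=
        (hB.continuousWithinAt ht0mem).mono hsub2
      rwa [nhdsWithin_Ioc_eq_nhdsGT ht0ltb] at h'
    rcases eq_or_lt_of_le (ht0good i) with heqc | hltc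
    · -- contact: use derivative
      have hder : g i t0 < B' t0 := hc t0 ht0Ico ht0good i heqc
      have hd : HasDerivWithinAt (fun z => f i z - B z) (g i t0 - B' t0) (Set.Ici t0) t0 :=
        (hf' i t0 ht0Ico).sub (hB' t0 ht0Ico)
      rw [hasDerivWithinAt_iff_tendsto_slope] at hd
      have hIci : Set.Ici t0 \ {t0} = Set.Ioi t0 := Set.Ici_sdiff_left
      rw [hIci] at hd
      have hneg : g i t0 - B' t0 < 0 := by linarith
      have hslope : ∀ᶠ z in 𝓝[>] t0, slope (fun z => f i z - B z) t0 z < 0 :=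
        hd.eventually (eventually_lt_nhds hneg) |>.mono (fun z hz => hz)
      filter_upwards [hslope, self_mem_nhdsWithin] with z hz hz2
      rw [slope_def_field] at hz
      have hzpos : 0 < z - t0 := by simpa [Set.mem_Ioi] using sub_pos.2 (Set.mem_Ioi.1 hz2)
      have := (div_neg_iff.1 hz)
      rcases this with ⟨h1, h2⟩ | ⟨h1, h2⟩
      · linarith
      · have : f i z - B z - (f i t0 - B t0) < 0 := h1
        rw [heqc] at this
        linarith
    · -- strict: use continuity
      have hft : Tendsto (f i) (𝓝[>] t0) (𝓝 (f i t0)) := by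
        have h' : Tendsto (f i) (𝓝[Set.Ioc t0 b] t0) (𝓝 (f i t0)) :=
          ((hf i).continuousWithinAt ht0mem).mono hsub2
        rwa [nhdsWithin_Ioc_eq_nhdsGT ht0ltb] at h'
      exact hft.eventually_lt hBt hltc
  -- derive contradiction with sInf
  obtain ⟨u, hu, husub⟩ := mem_nhdsGT_iff_exists_Ioc_subset.1 hev
  obtain ⟨t, htbad, htlt⟩ := exists_lt_of_csInf_lt hbadne (show sInf bad < u from hu)
  have h1 : t0 ≤ t := csInf_le hbdd htbad
  have h2 : t0 ≠ t := fun h => ht0notbad (h ▸ htbad)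
  have : t ∈ Set.Ioc t0 u := ⟨lt_of_le_of_ne h1 h2, le_of_lt htlt⟩
  obtain ⟨-, i, hi⟩ := htbad
  exact absurd (husub this i) (not_lt.2 (le_of_lt hi))

section pointwise
variable {n : ℕ} (A : Matrix (Fin n) (Fin n) ℝ) (β γ c xbar : Fin n → ℝ)

lemma sis_up (hA : ∀ i j, 0 ≤ A i j) (hβ : ∀ i, 0 < β i)
    (hc2 : ∀ i, 2 ≤ c i) (hxbar : ∀ i, 0 < xbar i ∧ xbar i ≤ 1 / c i)
    (heq : ∀ i, β i * (1 - c i * xbar i) * (1 - xbar i) * (∑ j, A i j * xbar j) = γ i * xbar i)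
    (y : Fin n → ℝ) (M : ℝ) (hM : 1 ≤ M) (i : Fin n)
    (hy0 : ∀ j, 0 ≤ y j) (hyM : ∀ j, y j ≤ M * xbar j) (hyi : y i = M * xbar i)
    (hyc : c i * y i ≤ 1) :
    sisF A β γ c y i ≤ -(β i * M * (∑ j, A i j * xbar j) * (xbar i * (M - 1))) := by
  have hci : (0:ℝ) < c i := lt_of_lt_of_le (by norm_num) (hc2 i)
  have hxi : 0 < xbar i := (hxbar i).1
  have hxc : c i * xbar i ≤ 1 := by
    have h := (hxbar i).2; rw [le_div_iff₀ hci] at h; linarith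
  have hxhalf : xbar i ≤ 1/2 := by nlinarith [hc2 i, hxi]
  have hyhalf : y i ≤ 1/2 := by nlinarith [hy0 i, hc2 i]
  have hyxi : xbar i ≤ y i := by rw [hyi]; nlinarith
  have hP0 : 0 ≤ ∑ j, A i j * xbar j :=
    Finset.sum_nonneg (fun j _ => mul_nonneg (hA i j) (le_of_lt (hxbar j).1))
  have hS : (∑ j, A i j * y j) ≤ M * ∑ j, A i j * xbar j := by
    rw [Finset.mul_sum]
    exact Finset.sum_le_sum fun j _ => by nlinarith [hA i j, hyM j]
  have hφ : 0 ≤ (1 - c i * y i) * (1 - y i) := mul_nonneg (by linarith) (by linarith)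
  have hkey : (1 - c i * y i) * (1 - y i) - (1 - c i * xbar i) * (1 - xbar i) ≤ -(y i - xbar i) := by
    nlinarith [hc2 i, hyhalf, hxhalf, hyxi]
  have hγeq : γ i * y i = M * (β i * (1 - c i * xbar i) * (1 - xbar i) * (∑ j, A i j * xbar j)) := by
    rw [hyi]; linear_combination (-M) * heq i
  have hbMP : 0 ≤ β i * M * (∑ j, A i j * xbar j) :=
    mul_nonneg (mul_nonneg (hβ i).le (by linarith)) hP0
  have h1 : β i * (1 - c i * y i) * (1 - y i) * (∑ j, A i j * y j)
      ≤ β i * (1 - c i * y i) * (1 - y i) * (M * ∑ j, A i j * xbar j) := by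
    have hbφ : 0 ≤ β i * (1 - c i * y i) * (1 - y i) := by nlinarith [(hβ i).le]
    exact mul_le_mul_of_nonneg_left hS hbφ
  have h2 := mul_le_mul_of_nonneg_left hkey hbMP
  unfold sisF
  rw [hγeq]
  nlinarith [h1, h2]

lemma sis_lo (hA : ∀ i j, 0 ≤ A i j) (hβ : ∀ i, 0 < β i)
    (hc2 : ∀ i, 2 ≤ c i) (hxbar : ∀ i, 0 < xbar i ∧ xbar i ≤ 1 / c i)
    (heq : ∀ i, β i * (1 - c i * xbar i) * (1 - xbar i) * (∑ j, A i j * xbar j) = γ i * xbar i)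
    (y : Fin n → ℝ) (m : ℝ) (hm0 : 0 ≤ m) (hm1 : m ≤ 1) (i : Fin n)
    (hym : ∀ j, m * xbar j ≤ y j) (hyi : y i = m * xbar i) :
    β i * m * (∑ j, A i j * xbar j) * (xbar i * (1 - m)) ≤ sisF A β γ c y i := by
  have hci : (0:ℝ) < c i := lt_of_lt_of_le (by norm_num) (hc2 i)
  have hxi : 0 < xbar i := (hxbar i).1
  have hxc : c i * xbar i ≤ 1 := by
    have h := (hxbar i).2; rw [le_div_iff₀ hci] at h; linarith
  have hxhalf : xbar i ≤ 1/2 := by nlinarith [hc2 i, hxi]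
  have hyi0 : 0 ≤ y i := by rw [hyi]; positivity
  have hyxi : y i ≤ xbar i := by rw [hyi]; nlinarith
  have hyhalf : y i ≤ 1/2 := le_trans hyxi hxhalf
  have hyci : c i * y i ≤ 1 := by
    rw [hyi]; nlinarith
  have hP0 : 0 ≤ ∑ j, A i j * xbar j :=
    Finset.sum_nonneg (fun j _ => mul_nonneg (hA i j) (le_of_lt (hxbar j).1))
  have hS : m * (∑ j, A i j * xbar j) ≤ (∑ j, A i j * y j) := by
    rw [Finset.mul_sum]
    exact Finset.sum_le_sum fun j _ => by nlinarith [hA i j, hym j]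
  have hφ : 0 ≤ (1 - c i * y i) * (1 - y i) := mul_nonneg (by linarith) (by linarith)
  have hkey : xbar i - y i ≤ (1 - c i * y i) * (1 - y i) - (1 - c i * xbar i) * (1 - xbar i) := by
    nlinarith [hc2 i, hyhalf, hxhalf, hyxi]
  have hγeq : γ i * y i = m * (β i * (1 - c i * xbar i) * (1 - xbar i) * (∑ j, A i j * xbar j)) := by
    rw [hyi]; linear_combination (-m) * heq i
  have hbMP : 0 ≤ β i * m * (∑ j, A i j * xbar j) :=
    mul_nonneg (mul_nonneg (hβ i).le hm0) hP0
  have h1 : β i * (1 - c i * y i) * (1 - y i) * (m * ∑ j, A i j * xbar j)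
      ≤ β i * (1 - c i * y i) * (1 - y i) * (∑ j, A i j * y j) := by
    have hbφ : 0 ≤ β i * (1 - c i * y i) * (1 - y i) := by nlinarith [(hβ i).le]
    exact mul_le_mul_of_nonneg_left hS hbφ
  have h2 := mul_le_mul_of_nonneg_left hkey hbMP
  unfold sisF
  rw [hγeq]
  nlinarith [h1, h2]

end pointwise



section inv
variable {n : ℕ} (A : Matrix (Fin n) (Fin n) ℝ) (β γ c xbar : Fin n → ℝ)

lemma sis_inv_lo (hA : ∀ i j, 0 ≤ A i j) (hβ : ∀ i, 0 < β i) (hγ : ∀ i, 0 ≤ γ i)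
    (hc2 : ∀ i, 2 ≤ c i) (hxbar : ∀ i, 0 < xbar i ∧ xbar i ≤ 1 / c i)
    (heq : ∀ i, β i * (1 - c i * xbar i) * (1 - xbar i) * (∑ j, A i j * xbar j) = γ i * xbar i)
    (y : Fin n → ℝ) (δ η' : ℝ) (hδ : 0 < δ) (hδh : δ ≤ 1/2) (hη'0 : 0 < η') (i : Fin n)
    (hηx : η' ≤ δ * xbar i)
    (hηA : η' * (∑ j, A i j) ≤ δ * (∑ j, A i j * xbar j))
    (hylo : ∀ j, δ * xbar j - η' ≤ y j)
    (hyi : y i = δ * xbar i - η') :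
    -(sisF A β γ c y i) ≤ -(δ * β i * (∑ j, A i j * xbar j) * ((1-δ) * xbar i))
      + η' * (β i * (∑ j, A i j)) := by
  have hci : (0:ℝ) < c i := lt_of_lt_of_le (by norm_num) (hc2 i)
  have hxi : 0 < xbar i := (hxbar i).1
  have hxc : c i * xbar i ≤ 1 := by
    have h := (hxbar i).2; rw [le_div_iff₀ hci] at h; linarith
  have hxhalf : xbar i ≤ 1/2 := by nlinarith [hc2 i, hxi]
  have hP0 : 0 ≤ ∑ j, A i j * xbar j :=
    Finset.sum_nonneg (fun j _ => mul_nonneg (hA i j) (le_of_lt (hxbar j).1))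
  have hArow0 : 0 ≤ ∑ j, A i j := Finset.sum_nonneg (fun j _ => hA i j)
  have hS : δ * (∑ j, A i j * xbar j) - η' * (∑ j, A i j) ≤ ∑ j, A i j * y j := by
    have h : ∑ j, (A i j * (δ * xbar j) - A i j * η') ≤ ∑ j, A i j * y j :=
      Finset.sum_le_sum fun j _ => by nlinarith [hA i j, hylo j]
    calc δ * (∑ j, A i j * xbar j) - η' * (∑ j, A i j)
        = ∑ j, (A i j * (δ * xbar j) - A i j * η') := by
          rw [Finset.sum_sub_distrib, Finset.mul_sum, Finset.mul_sum]
          congr 1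
          · exact Finset.sum_congr rfl fun j _ => by ring
          · exact Finset.sum_congr rfl fun j _ => by ring
      _ ≤ ∑ j, A i j * y j := h
  unfold sisF
  -- abstract atoms
  set b := β i with hbdef
  set P := ∑ j, A i j * xbar j with hPdef
  set S := ∑ j, A i j * y j with hSdef
  set R := ∑ j, A i j with hRdef
  set u := y i with hudef
  set v := xbar i with hvdef
  set k := c i with hkdef
  have hγx : γ i * v = b * ((1 - k * v) * (1 - v)) * P := by
    rw [hbdef, hPdef, hvdef, hkdef]
    linear_combination -heq i
  have hγ0 : 0 ≤ γ i := hγ i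
  have hb : 0 < b := hβ i
  have hk2 : 2 ≤ k := hc2 i
  clear_value b P S R u v k
  clear hbdef hPdef hSdef hRdef hudef hvdef hkdef
  have hS0 : 0 ≤ S := le_trans (by nlinarith) hS
  have hy0 : 0 ≤ u := by rw [hyi]; linarith
  have hyd : u ≤ δ * v := by rw [hyi]; linarith
  have hyq : u ≤ 1/4 := by nlinarith
  -- phi facts
  have hφy0 : 0 ≤ (1 - k * u) * (1 - u) :=
    mul_nonneg (by nlinarith) (by nlinarith)
  have hφyd : (1 - k * (δ * v)) * (1 - δ * v) ≤ (1 - k * u) * (1 - u) := by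
    have h1 : 0 ≤ (δ * v - u) * ((k + 1) - k * (u + δ * v)) := by
      apply mul_nonneg (by linarith)
      nlinarith
    nlinarith [h1]
  have hφdx : (1 - k * v) * (1 - v) + (1-δ) * v ≤ (1 - k * (δ * v)) * (1 - δ * v) := by
    have h1 : 0 ≤ ((1-δ) * v) * (k * (1 - (δ * v + v))) := by
      apply mul_nonneg (by nlinarith) (mul_nonneg (by linarith) (by nlinarith))
    nlinarith [h1]
  have hφx0 : 0 ≤ (1 - k * v) * (1 - v) := mul_nonneg (by linarith) (by linarith)
  have hφd0 : 0 ≤ (1 - k * (δ * v)) * (1 - δ * v) := by nlinarith [hφdx, hφx0, mul_nonneg (show (0:ℝ) ≤ 1-δ by linarith) hxi.le]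
  have hφd1 : (1 - k * (δ * v)) * (1 - δ * v) ≤ 1 := by
    nlinarith [mul_nonneg (mul_nonneg (by linarith : (0:ℝ) ≤ k) (by nlinarith : (0:ℝ) ≤ δ * v))
      (by nlinarith : (0:ℝ) ≤ 1 - δ * v)]
  -- chain
  have hmain : b * ((1 - k * (δ * v)) * (1 - δ * v)) * (δ * P - η' * R)
      ≤ b * ((1 - k * u) * (1 - u)) * S := by
    apply mul_le_mul (mul_le_mul_of_nonneg_left hφyd hb.le) hS (by nlinarith)
      (mul_nonneg hb.le hφy0)
  have hstep : b * ((1 - k * (δ * v)) * (1 - δ * v)) * (δ * P) - η' * (b * R)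
      ≤ b * ((1 - k * (δ * v)) * (1 - δ * v)) * (δ * P - η' * R) := by
    have h2 : b * ((1 - k * (δ * v)) * (1 - δ * v)) * (η' * R) ≤ η' * (b * R) := by
      nlinarith [mul_nonneg (mul_nonneg hb.le hη'0.le) hArow0]
    nlinarith [h2]
  have hstep2 : b * ((1 - k * v) * (1 - v) + (1-δ) * v) * (δ * P)
      ≤ b * ((1 - k * (δ * v)) * (1 - δ * v)) * (δ * P) := by
    have h3 : 0 ≤ b * (δ * P) := mul_nonneg hb.le (mul_nonneg hδ.le hP0)
    nlinarith [mul_le_mul_of_nonneg_right hφdx h3]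
  have hγy : γ i * u ≤ δ * (γ i * v) := by
    rw [hyi]; nlinarith [mul_nonneg hγ0 hη'0.le]
  nlinarith [hmain, hstep, hstep2, hγy, hγx]

lemma sis_inv_up (hA : ∀ i j, 0 ≤ A i j) (hβ : ∀ i, 0 < β i) (hγ : ∀ i, 0 ≤ γ i)
    (hc2 : ∀ i, 2 ≤ c i)
    (y : Fin n → ℝ) (η' : ℝ) (hη'0 : 0 < η') (hη'q : η' ≤ 1/4) (i : Fin n)
    (hyhi : ∀ j, y j ≤ 1 / c j + η')
    (hylo2 : ∀ j, -η' ≤ y j)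
    (hyi : y i = 1 / c i + η') :
    sisF A β γ c y i ≤ β i * c i * (∑ j, A i j) * η' * η' := by
  have hci : (0:ℝ) < c i := lt_of_lt_of_le (by norm_num) (hc2 i)
  have hb : 0 < β i := hβ i
  have hArow0 : 0 ≤ ∑ j, A i j := Finset.sum_nonneg (fun j _ => hA i j)
  have hinv : 1 / c i ≤ 1/2 := by
    rw [div_le_iff₀ hci]; linarith [hc2 i]
  have hinv0 : 0 < 1 / c i := by positivity
  have hyi34 : y i ≤ 3/4 := by rw [hyi]; linarith
  have hyi0 : 0 < y i := by rw [hyi]; linarith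
  have hcy : 1 - c i * y i = -(c i * η') := by
    rw [hyi]; field_simp; ring
  have hS : -(η' * (∑ j, A i j)) ≤ ∑ j, A i j * y j := by
    have h : ∑ j, (-(A i j * η')) ≤ ∑ j, A i j * y j :=
      Finset.sum_le_sum fun j _ => by nlinarith [hA i j, hylo2 j]
    calc -(η' * (∑ j, A i j)) = ∑ j, (-(A i j * η')) := by
          rw [Finset.sum_neg_distrib, Finset.mul_sum]
          congr 1; exact Finset.sum_congr rfl fun j _ => by ring
      _ ≤ _ := h
  unfold sisF
  set S := ∑ j, A i j * y j with hSdef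
  set R := ∑ j, A i j with hRdef
  set u := y i with hudef
  clear_value S R u
  clear hSdef hRdef hudef
  have h1y : 0 < 1 - u := by linarith
  have h1y1 : 1 - u ≤ 1 := by linarith
  have hterm : β i * (1 - c i * u) * (1 - u) * S ≤ β i * c i * R * η' * η' := by
    rw [hcy]
    have h2 : -(β i * (c i * η') * (1 - u)) * S
        ≤ -(β i * (c i * η') * (1 - u)) * (-(η' * R)) := by
      apply mul_le_mul_of_nonpos_left hS
      have : 0 ≤ β i * (c i * η') * (1 - u) := by positivity
      linarith
    nlinarith [h2, mul_nonneg (mul_nonneg (mul_nonneg hb.le hci.le) hArow0)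
      (mul_nonneg hη'0.le hη'0.le)]
  have hγ0 : 0 ≤ γ i * u := mul_nonneg (hγ i) hyi0.le
  linarith
end inv

section soln
variable {n : ℕ} {A : Matrix (Fin n) (Fin n) ℝ} {β γ c xbar : Fin n → ℝ} {x : ℝ → Fin n → ℝ}

open Set Filter Topology
lemma comp_deriv (hsol : IsSol A β γ c x) {t : ℝ} (ht : 0 ≤ t) (i : Fin n) :
    HasDerivWithinAt (fun s => x s i) (sisF A β γ c (x t) i) (Set.Ici t) t :=
  (hasDerivWithinAt_pi.1 ((hsol t ht).mono (Set.Ici_subset_Ici.2 ht))) i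

lemma comp_cont (hsol : IsSol A β γ c x) (i : Fin n) :
    ContinuousOn (fun s => x s i) (Set.Ici 0) :=
  fun t ht => ((hasDerivWithinAt_pi.1 (hsol t ht)) i).continuousWithinAt

lemma upper_const (hA : ∀ i j, 0 ≤ A i j) (hβ : ∀ i, 0 < β i)
    (hc2 : ∀ i, 2 ≤ c i) (hxbar : ∀ i, 0 < xbar i ∧ xbar i ≤ 1 / c i)
    (heq : ∀ i, β i * (1 - c i * xbar i) * (1 - xbar i) * (∑ j, A i j * xbar j) = γ i * xbar i)
    (hP : ∀ i, 0 < ∑ j, A i j * xbar j)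
    (hsol : IsSol A β γ c x)
    {δ : ℝ} (hδ0 : 0 < δ)
    (hinv : ∀ t, 0 ≤ t → ∀ i, δ * xbar i ≤ x t i ∧ x t i ≤ 1 / c i)
    (C : ℝ) (hC : 1 < C) (a : ℝ) (ha : 0 ≤ a) (hxa : ∀ i, x a i ≤ C * xbar i) :
    ∀ t, a ≤ t → ∀ i, x t i ≤ C * xbar i := by
  intro t hat i
  have hta : 0 ≤ t := le_trans ha hat
  have hbar := barrier (a := a) (b := t)
    (fun i s => x s i / xbar i)
    (fun i s => sisF A β γ c (x s) i / xbar i)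
    (fun _ => C) (fun _ => 0)
    (fun i => ((comp_cont hsol i).mono (fun z hz => le_trans ha hz.1)).div_const _)
    (fun i s hs => (comp_deriv hsol (le_trans ha hs.1) i).div_const _)
    continuousOn_const (fun s _ => hasDerivWithinAt_const s _ C)
    (fun i => (div_le_iff₀ (hxbar i).1).2 (by linarith [hxa i]))
    ?_
  · have := hbar t ⟨hat, le_refl t⟩ i
    rw [div_le_iff₀ (hxbar i).1] at this
    linarith
  · intro s hs hall i hct
    have hs0 : 0 ≤ s := le_trans ha hs.1
    have hxsi : x s i = C * xbar i := by
      have := (div_eq_iff (hxbar i).1.ne').1 hct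
      linarith [this]
    have hup := sis_up A β γ c xbar hA hβ hc2 hxbar heq (x s) C hC.le i
      (fun j => le_trans (le_of_lt (mul_pos hδ0 (hxbar j).1)) (hinv s hs0 j).1)
      (fun j => by
        have := hall j
        rw [div_le_iff₀ (hxbar j).1] at this
        linarith)
      hxsi
      (by
        have h2 := (hinv s hs0 i).2
        have hci : (0:ℝ) < c i := lt_of_lt_of_le (by norm_num) (hc2 i)
        rw [le_div_iff₀ hci] at h2
        linarith)
    have hq : 0 < β i * C * (∑ j, A i j * xbar j) * (xbar i * (C - 1)) := by
      apply mul_pos (mul_pos (mul_pos (hβ i) (by linarith)) (hP i))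
      exact mul_pos (hxbar i).1 (by linarith)
    have : sisF A β γ c (x s) i < 0 := by linarith
    exact div_neg_of_neg_of_pos this (hxbar i).1

lemma lower_const (hA : ∀ i j, 0 ≤ A i j) (hβ : ∀ i, 0 < β i)
    (hc2 : ∀ i, 2 ≤ c i) (hxbar : ∀ i, 0 < xbar i ∧ xbar i ≤ 1 / c i)
    (heq : ∀ i, β i * (1 - c i * xbar i) * (1 - xbar i) * (∑ j, A i j * xbar j) = γ i * xbar i)
    (hP : ∀ i, 0 < ∑ j, A i j * xbar j)
    (hsol : IsSol A β γ c x)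
    (m : ℝ) (hm0 : 0 < m) (hm1 : m < 1) (a : ℝ) (ha : 0 ≤ a)
    (hxa : ∀ i, m * xbar i ≤ x a i) :
    ∀ t, a ≤ t → ∀ i, m * xbar i ≤ x t i := by
  intro t hat i
  have hbar := barrier (a := a) (b := t)
    (fun i s => -(x s i / xbar i))
    (fun i s => -(sisF A β γ c (x s) i / xbar i))
    (fun _ => -m) (fun _ => 0)
    (fun i => (((comp_cont hsol i).mono (fun z hz => le_trans ha hz.1)).div_const _).neg)
    (fun i s hs => ((comp_deriv hsol (le_trans ha hs.1) i).div_const _).neg)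
    continuousOn_const (fun s _ => hasDerivWithinAt_const s _ _)
    (fun i => by
      have := hxa i
      have h2 : m ≤ x a i / xbar i := (le_div_iff₀ (hxbar i).1).2 (by linarith)
      linarith)
    ?_
  · have := hbar t ⟨hat, le_refl t⟩ i
    have h2 : m ≤ x t i / xbar i := by linarith
    rw [le_div_iff₀ (hxbar i).1] at h2
    linarith
  · intro s hs hall i hct
    have hxsi : x s i = m * xbar i := by
      have h1 : x s i / xbar i = m := by linarith
      have := (div_eq_iff (hxbar i).1.ne').1 h1
      linarith
    have hlo := sis_lo A β γ c xbar hA hβ hc2 hxbar heq (x s) m hm0.le hm1.le i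
      (fun j => by
        have := hall j
        have h2 : m ≤ x s j / xbar j := by linarith
        rw [le_div_iff₀ (hxbar j).1] at h2
        linarith)
      hxsi
    have hq : 0 < β i * m * (∑ j, A i j * xbar j) * (xbar i * (1 - m)) := by
      apply mul_pos (mul_pos (mul_pos (hβ i) hm0) (hP i))
      exact mul_pos (hxbar i).1 (by linarith)
    have h3 : 0 < sisF A β γ c (x s) i := by linarith
    have h4 : 0 < sisF A β γ c (x s) i / xbar i := div_pos h3 (hxbar i).1
    linarith

lemma kappa_le {n : ℕ} {q : Fin n → ℝ} (hq : ∀ i, 0 < q i) (i : Fin n) :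
    1 / ((∑ j, 1 / q j) + 1) ≤ q i ∧ 0 < 1 / ((∑ j, 1 / q j) + 1) := by
  have hsum0 : 0 ≤ ∑ j, 1 / q j := Finset.sum_nonneg (fun j _ => (one_div_pos.2 (hq j)).le)
  have hden : 0 < (∑ j, 1 / q j) + 1 := by linarith
  constructor
  · rw [div_le_iff₀ hden]
    have h1 : 1 / q i ≤ ∑ j, 1 / q j :=
      Finset.single_le_sum (f := fun j => 1 / q j) (fun j _ => (one_div_pos.2 (hq j)).le)
        (Finset.mem_univ i)
    have h2 : q i * (1 / q i) = 1 := mul_one_div_cancel (hq i).ne'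
    nlinarith [hq i]
  · exact one_div_pos.2 hden

lemma upper_decay (hn : 2 ≤ n) (hA : ∀ i j, 0 ≤ A i j) (hβ : ∀ i, 0 < β i)
    (hc2 : ∀ i, 2 ≤ c i) (hxbar : ∀ i, 0 < xbar i ∧ xbar i ≤ 1 / c i)
    (heq : ∀ i, β i * (1 - c i * xbar i) * (1 - xbar i) * (∑ j, A i j * xbar j) = γ i * xbar i)
    (hP : ∀ i, 0 < ∑ j, A i j * xbar j)
    (hsol : IsSol A β γ c x)
    {δ : ℝ} (hδ0 : 0 < δ)
    (hinv : ∀ t, 0 ≤ t → ∀ i, δ * xbar i ≤ x t i ∧ x t i ≤ 1 / c i)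
    (ε : ℝ) (hε : 0 < ε) (hε14 : ε ≤ 1/4) :
    ∃ T, 0 ≤ T ∧ ∀ i, x T i ≤ (1 + ε) * xbar i := by
  have i0 : Fin n := ⟨0, by omega⟩
  have hcx : ∀ i, 0 < c i * xbar i := fun i =>
    mul_pos (lt_of_lt_of_le (by norm_num) (hc2 i)) (hxbar i).1
  have hcx1 : ∀ i, c i * xbar i ≤ 1 := by
    intro i
    have h := (hxbar i).2
    have hci : (0:ℝ) < c i := lt_of_lt_of_le (by norm_num) (hc2 i)
    rw [le_div_iff₀ hci] at h; linarith
  set Cstar : ℝ := (∑ i, 1 / (c i * xbar i)) + 1 with hCdef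
  clear_value Cstar
  have hCstar_ge : ∀ i, 1 / (c i * xbar i) ≤ Cstar - 1 := by
    intro i
    have := Finset.single_le_sum (f := fun i => 1 / (c i * xbar i))
      (fun j _ => (one_div_pos.2 (hcx j)).le) (Finset.mem_univ i)
    beta_reduce at this
    rw [hCdef]; linarith
  have hCstar2 : 2 ≤ Cstar := by
    have h1 : (1:ℝ) ≤ 1 / (c i0 * xbar i0) := by
      rw [le_div_iff₀ (hcx i0)]; linarith [hcx1 i0]
    linarith [hCstar_ge i0]
  set κ : ℝ := 1 / ((∑ j, 1 / (β j * (∑ k, A j k * xbar k))) + 1) with hκdef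
  have hκ := fun i => kappa_le (q := fun j => β j * (∑ k, A j k * xbar k))
    (fun j => mul_pos (hβ j) (hP j)) i
  have hκpos : 0 < κ := (hκ i0).2
  have hκle : ∀ i, κ ≤ β i * (∑ k, A i k * xbar k) := fun i => (hκ i).1
  clear_value κ
  set ρ : ℝ := κ * ε / 2 with hρdef
  have hρpos : 0 < ρ := by rw [hρdef]; exact div_pos (mul_pos hκpos hε) two_pos
  clear_value ρ
  set T : ℝ := (Cstar - (1 + ε)) / ρ with hTdef
  have hT0 : 0 ≤ T := div_nonneg (by linarith) hρpos.le
  clear_value T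
  refine ⟨T, hT0, ?_⟩
  have hbar := barrier (a := 0) (b := T)
    (fun i s => x s i / xbar i)
    (fun i s => sisF A β γ c (x s) i / xbar i)
    (fun s => Cstar - ρ * s) (fun _ => -ρ)
    (fun i => ((comp_cont hsol i).mono (fun z hz => hz.1)).div_const _)
    (fun i s hs => (comp_deriv hsol hs.1 i).div_const _)
    (Continuous.continuousOn (by continuity))
    (fun s _ => by
      have h := ((hasDerivAt_id s).const_mul ρ).const_sub Cstar
      simp only [mul_one] at h
      exact h.hasDerivWithinAt)
    (fun i => by
      have h2 := (hinv 0 (le_refl 0) i).2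
      have hci : (0:ℝ) < c i := lt_of_lt_of_le (by norm_num) (hc2 i)
      have h3 : c i ≠ 0 := hci.ne'
      have h4 : xbar i ≠ 0 := (hxbar i).1.ne'
      have e1 : (1 / (c i * xbar i)) * xbar i = 1 / c i := by
        field_simp
      have e2 := mul_le_mul_of_nonneg_right (hCstar_ge i) (hxbar i).1.le
      rw [e1] at e2
      rw [div_le_iff₀ (hxbar i).1]
      simp only [mul_zero, sub_zero]
      nlinarith [(hxbar i).1])
    ?_
  · intro i
    have h := hbar T ⟨hT0, le_refl T⟩ i
    beta_reduce at h
    have e3 : Cstar - ρ * T = 1 + ε := by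
      rw [hTdef, mul_div_cancel₀ _ hρpos.ne']
      ring
    rw [e3, div_le_iff₀ (hxbar i).1] at h
    linarith
  · intro s hs hall i hct
    beta_reduce at hct
    set M : ℝ := Cstar - ρ * s with hMdef
    clear_value M
    have hMε : 1 + ε < M := by
      have h1 : ρ * s < ρ * T := mul_lt_mul_of_pos_left hs.2 hρpos
      have e3 : ρ * T = Cstar - (1 + ε) := by
        rw [hTdef, mul_div_cancel₀ _ hρpos.ne']
      rw [hMdef]; linarith
    have hM1 : 1 ≤ M := by linarith
    have hxsi : x s i = M * xbar i := by
      have := (div_eq_iff (hxbar i).1.ne').1 hct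
      linarith [this]
    have hup := sis_up A β γ c xbar hA hβ hc2 hxbar heq (x s) M hM1 i
      (fun j => le_trans (le_of_lt (mul_pos hδ0 (hxbar j).1)) (hinv s hs.1 j).1)
      (fun j => by
        have := hall j
        beta_reduce at this
        rw [div_le_iff₀ (hxbar j).1] at this
        exact this)
      hxsi
      (by
        have h2 := (hinv s hs.1 i).2
        have hci : (0:ℝ) < c i := lt_of_lt_of_le (by norm_num) (hc2 i)
        rw [le_div_iff₀ hci] at h2
        linarith)
    have hq : ρ < β i * M * (∑ j, A i j * xbar j) * (M - 1) := by
      have h1 : κ * (M * (M - 1)) ≤ (β i * (∑ k, A i k * xbar k)) * (M * (M - 1)) :=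
        mul_le_mul_of_nonneg_right (hκle i) (by nlinarith)
      have h2 : κ * ε < κ * (M * (M - 1)) := by
        apply mul_lt_mul_of_pos_left _ hκpos
        nlinarith
      rw [hρdef]
      nlinarith
    have hdle : sisF A β γ c (x s) i / xbar i ≤ -(β i * M * (∑ j, A i j * xbar j) * (M - 1)) := by
      rw [div_le_iff₀ (hxbar i).1]
      nlinarith [hup]
    calc sisF A β γ c (x s) i / xbar i
        ≤ -(β i * M * (∑ j, A i j * xbar j) * (M - 1)) := hdle
      _ < -ρ := by linarith

lemma lower_decay (hn : 2 ≤ n) (hA : ∀ i j, 0 ≤ A i j) (hβ : ∀ i, 0 < β i)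
    (hc2 : ∀ i, 2 ≤ c i) (hxbar : ∀ i, 0 < xbar i ∧ xbar i ≤ 1 / c i)
    (heq : ∀ i, β i * (1 - c i * xbar i) * (1 - xbar i) * (∑ j, A i j * xbar j) = γ i * xbar i)
    (hP : ∀ i, 0 < ∑ j, A i j * xbar j)
    (hsol : IsSol A β γ c x)
    {δ : ℝ} (hδ0 : 0 < δ) (hδh : δ ≤ 1/2)
    (hinv : ∀ t, 0 ≤ t → ∀ i, δ * xbar i ≤ x t i ∧ x t i ≤ 1 / c i)
    (ε : ℝ) (hε : 0 < ε) (hε14 : ε ≤ 1/4) :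
    ∃ T, 0 ≤ T ∧ ∀ i, (1 - ε) * xbar i ≤ x T i := by
  have i0 : Fin n := ⟨0, by omega⟩
  set κ : ℝ := 1 / ((∑ j, 1 / (β j * (∑ k, A j k * xbar k))) + 1) with hκdef
  have hκ := fun i => kappa_le (q := fun j => β j * (∑ k, A j k * xbar k))
    (fun j => mul_pos (hβ j) (hP j)) i
  have hκpos : 0 < κ := (hκ i0).2
  have hκle : ∀ i, κ ≤ β i * (∑ k, A i k * xbar k) := fun i => (hκ i).1
  clear_value κ
  set ρ : ℝ := κ * δ * ε / 2 with hρdef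
  have hρpos : 0 < ρ := by
    rw [hρdef]; exact div_pos (mul_pos (mul_pos hκpos hδ0) hε) two_pos
  clear_value ρ
  set T : ℝ := (1 - ε - δ) / ρ with hTdef
  have hT0 : 0 ≤ T := div_nonneg (by linarith) hρpos.le
  clear_value T
  refine ⟨T, hT0, ?_⟩
  have hbar := barrier (a := 0) (b := T)
    (fun i s => -(x s i / xbar i))
    (fun i s => -(sisF A β γ c (x s) i / xbar i))
    (fun s => -(δ + ρ * s)) (fun _ => -ρ)
    (fun i => (((comp_cont hsol i).mono (fun z hz => hz.1)).div_const _).neg)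
    (fun i s hs => ((comp_deriv hsol hs.1 i).div_const _).neg)
    (Continuous.continuousOn (by continuity))
    (fun s _ => by
      have h := (((hasDerivAt_id s).const_mul ρ).const_add δ).neg
      simp only [mul_one] at h
      exact h.hasDerivWithinAt)
    (fun i => by
      have h2 := (hinv 0 (le_refl 0) i).1
      have h3 : δ ≤ x 0 i / xbar i := (le_div_iff₀ (hxbar i).1).2 (by linarith)
      simp only [mul_zero, add_zero]
      linarith)
    ?_
  · intro i
    have h := hbar T ⟨hT0, le_refl T⟩ i
    beta_reduce at h
    have e3 : δ + ρ * T = 1 - ε := by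
      rw [hTdef, mul_div_cancel₀ _ hρpos.ne']
      ring
    rw [e3] at h
    have h2 : 1 - ε ≤ x T i / xbar i := by linarith
    rw [le_div_iff₀ (hxbar i).1] at h2
    linarith
  · intro s hs hall i hct
    beta_reduce at hct
    set m : ℝ := δ + ρ * s with hmdef
    clear_value m
    have hms : 0 ≤ ρ * s := mul_nonneg hρpos.le hs.1
    have hmδ : δ ≤ m := by rw [hmdef]; linarith
    have hmε : m < 1 - ε := by
      have h1 : ρ * s < ρ * T := mul_lt_mul_of_pos_left hs.2 hρpos
      have e3 : ρ * T = 1 - ε - δ := by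
        rw [hTdef, mul_div_cancel₀ _ hρpos.ne']
      rw [hmdef]; linarith
    have hxsi : x s i = m * xbar i := by
      have h1 : x s i / xbar i = m := by linarith
      have := (div_eq_iff (hxbar i).1.ne').1 h1
      linarith [this]
    have hlo := sis_lo A β γ c xbar hA hβ hc2 hxbar heq (x s) m (by linarith) (by linarith) i
      (fun j => by
        have := hall j
        beta_reduce at this
        have h2 : m ≤ x s j / xbar j := by linarith
        rw [le_div_iff₀ (hxbar j).1] at h2
        linarith)
      hxsi
    have hq : ρ < β i * m * (∑ j, A i j * xbar j) * (1 - m) := by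
      have h1 : κ * (m * (1 - m)) ≤ (β i * (∑ k, A i k * xbar k)) * (m * (1 - m)) :=
        mul_le_mul_of_nonneg_right (hκle i) (by nlinarith)
      have h2 : κ * (δ * ε) < κ * (m * (1 - m)) := by
        apply mul_lt_mul_of_pos_left _ hκpos
        nlinarith
      rw [hρdef]
      nlinarith
    have hdle : β i * m * (∑ j, A i j * xbar j) * (1 - m) ≤ sisF A β γ c (x s) i / xbar i := by
      rw [le_div_iff₀ (hxbar i).1]
      nlinarith [hlo]
    have : ρ < sisF A β γ c (x s) i / xbar i := by linarith
    linarith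

lemma eps_le {v C ε₀ : ℝ} (hC : 0 < C) (hε₀ : 0 < ε₀)
    (h : ∀ ε, 0 < ε → ε ≤ ε₀ → v ≤ ε * C) : v ≤ 0 := by
  by_contra hv
  push_neg at hv
  have h1 : 0 < v / (2 * C) := by positivity
  have h2 := h (min ε₀ (v / (2 * C))) (lt_min hε₀ h1) (min_le_left _ _)
  have h4 : min ε₀ (v / (2 * C)) * C ≤ (v / (2 * C)) * C :=
    mul_le_mul_of_nonneg_right (min_le_right _ _) hC.le
  have h5 : (v / (2 * C)) * C = v / 2 := by field_simp
  linarith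

lemma invariance (hn : 2 ≤ n) (hA : ∀ i j, 0 ≤ A i j) (hβ : ∀ i, 0 < β i) (hγ : ∀ i, 0 ≤ γ i)
    (hc2 : ∀ i, 2 ≤ c i) (hxbar : ∀ i, 0 < xbar i ∧ xbar i ≤ 1 / c i)
    (heq : ∀ i, β i * (1 - c i * xbar i) * (1 - xbar i) * (∑ j, A i j * xbar j) = γ i * xbar i)
    (hP : ∀ i, 0 < ∑ j, A i j * xbar j)
    (hsol : IsSol A β γ c x)
    (δ : ℝ) (hδ0 : 0 < δ) (hδh : δ ≤ 1/2)
    (hx0lo : ∀ i, δ * xbar i ≤ x 0 i) (hx0hi : ∀ i, x 0 i ≤ 1 / c i) :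
    ∀ t, 0 ≤ t → ∀ i, δ * xbar i ≤ x t i ∧ x t i ≤ 1 / c i := by
  have hne : Nonempty (Fin n) := ⟨⟨0, by omega⟩⟩
  have hR0 : ∀ i, (0:ℝ) ≤ ∑ j, A i j := fun i => Finset.sum_nonneg (fun j _ => hA i j)
  -- the constant η
  set η : ℝ := min (1/4) (Finset.univ.inf' Finset.univ_nonempty (fun i =>
    min (δ * xbar i) (min (δ * (∑ j, A i j * xbar j) / ((∑ j, A i j) + 1))
      (δ * β i * (∑ j, A i j * xbar j) * ((1-δ) * xbar i) / (β i * (∑ j, A i j) + 1)))))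
    with hηdef
  have hηpos : 0 < η := by
    apply lt_min (by norm_num)
    rw [Finset.lt_inf'_iff]
    intro i _
    have h1 : 0 < δ * xbar i := mul_pos hδ0 (hxbar i).1
    have h2 : 0 < δ * (∑ j, A i j * xbar j) / ((∑ j, A i j) + 1) := by
      apply div_pos (mul_pos hδ0 (hP i)); linarith [hR0 i]
    have h3 : 0 < δ * β i * (∑ j, A i j * xbar j) * ((1-δ) * xbar i) / (β i * (∑ j, A i j) + 1) := by
      apply div_pos
      · apply mul_pos (mul_pos (mul_pos hδ0 (hβ i)) (hP i))
        exact mul_pos (by linarith) (hxbar i).1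
      · have := mul_nonneg (hβ i).le (hR0 i); linarith
    exact lt_min h1 (lt_min h2 h3)
  have hηle : ∀ i, η ≤ min (δ * xbar i) (min (δ * (∑ j, A i j * xbar j) / ((∑ j, A i j) + 1))
      (δ * β i * (∑ j, A i j * xbar j) * ((1-δ) * xbar i) / (β i * (∑ j, A i j) + 1))) := fun i =>
    le_trans (min_le_right _ _) (Finset.inf'_le _ (Finset.mem_univ i))
  have hη14 : η ≤ 1/4 := min_le_left _ _
  have hηx : ∀ i, η ≤ δ * xbar i := fun i => le_trans (hηle i) (min_le_left _ _)
  have hηA : ∀ i, η * (∑ j, A i j) ≤ δ * (∑ j, A i j * xbar j) := by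
    intro i
    have h1 : η ≤ δ * (∑ j, A i j * xbar j) / ((∑ j, A i j) + 1) :=
      le_trans (hηle i) (le_trans (min_le_right _ _) (min_le_left _ _))
    have h2 : (0:ℝ) < (∑ j, A i j) + 1 := by linarith [hR0 i]
    rw [le_div_iff₀ h2] at h1
    nlinarith [hR0 i, hηpos]
  have hηρ : ∀ i, η * (β i * (∑ j, A i j))
      ≤ δ * β i * (∑ j, A i j * xbar j) * ((1-δ) * xbar i) := by
    intro i
    have h1 : η ≤ δ * β i * (∑ j, A i j * xbar j) * ((1-δ) * xbar i) / (β i * (∑ j, A i j) + 1) :=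
      le_trans (hηle i) (le_trans (min_le_right _ _) (min_le_right _ _))
    have h2 : (0:ℝ) < β i * (∑ j, A i j) + 1 := by
      have := mul_nonneg (hβ i).le (hR0 i); linarith
    rw [le_div_iff₀ h2] at h1
    nlinarith [mul_nonneg (hβ i).le (hR0 i), hηpos]
  -- the constant L
  set L : ℝ := 1 + ∑ i, β i * c i * (∑ j, A i j) with hLdef
  have hterm0 : ∀ i, (0:ℝ) ≤ β i * c i * (∑ j, A i j) := by
    intro i
    exact mul_nonneg (mul_nonneg (hβ i).le (by linarith [hc2 i])) (hR0 i)
  have hL1 : 1 ≤ L := by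
    have : (0:ℝ) ≤ ∑ i, β i * c i * (∑ j, A i j) := Finset.sum_nonneg (fun i _ => hterm0 i)
    rw [hLdef]; linarith
  have hLpos : 0 < L := by linarith
  have hLi : ∀ i, β i * c i * (∑ j, A i j) ≤ L - 1 := by
    intro i
    have := Finset.single_le_sum (f := fun i => β i * c i * (∑ j, A i j))
      (fun i _ => hterm0 i) (Finset.mem_univ i)
    beta_reduce at this
    rw [hLdef]; linarith
  -- main: fix T
  intro T hT i
  set ε₀ : ℝ := η / Real.exp (L * T) with hε₀def
  have hexpT : 0 < Real.exp (L * T) := Real.exp_pos _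
  have hε₀pos : 0 < ε₀ := div_pos hηpos hexpT
  -- barrier conclusion for each ε
  have key : ∀ ε, 0 < ε → ε ≤ ε₀ →
      (δ * xbar i - x T i ≤ ε * Real.exp (L * T) ∧ x T i - 1 / c i ≤ ε * Real.exp (L * T)) := by
    intro ε hε hεle
    set B : ℝ → ℝ := fun s => ε * Real.exp (L * s) with hBdef
    set B' : ℝ → ℝ := fun s => ε * (Real.exp (L * s) * L) with hB'def
    have hBpos : ∀ s, 0 < B s := fun s => mul_pos hε (Real.exp_pos _)
    have hBder : ∀ s : ℝ, HasDerivAt B (B' s) s := by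
      intro s
      have h1 : HasDerivAt (fun u : ℝ => L * u) L s := by
        simpa using (hasDerivAt_id s).const_mul L
      have h2 := (Real.hasDerivAt_exp (L * s)).comp s h1
      exact h2.const_mul ε
    have hBeta : ∀ t ∈ Set.Icc (0:ℝ) T, B t ≤ η := by
      intro t htm
      have h1 : B t ≤ ε₀ * Real.exp (L * t) :=
        mul_le_mul_of_nonneg_right hεle (Real.exp_pos _).le
      have h2 : Real.exp (L * t) ≤ Real.exp (L * T) :=
        Real.exp_le_exp.2 (mul_le_mul_of_nonneg_left htm.2 hLpos.le)
      have h3 : ε₀ * Real.exp (L * t) ≤ ε₀ * Real.exp (L * T) :=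
        mul_le_mul_of_nonneg_left h2 hε₀pos.le
      have h4 : ε₀ * Real.exp (L * T) = η := div_mul_cancel₀ _ hexpT.ne'
      linarith
    -- apply barrier
    have hbar := barrier (a := 0) (b := T)
      (Sum.elim (fun i t => δ * xbar i - x t i) (fun i t => x t i - 1 / c i))
      (Sum.elim (fun i t => -(sisF A β γ c (x t) i)) (fun i t => sisF A β γ c (x t) i))
      B B'
      (by
        rintro (i | i)
        · exact (continuousOn_const.sub ((comp_cont hsol i).mono (fun z hz => hz.1)))
        · exact ((comp_cont hsol i).mono (fun z hz => hz.1)).sub continuousOn_const)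
      (by
        rintro (i | i) t ht
        · exact (comp_deriv hsol ht.1 i).const_sub _
        · exact (comp_deriv hsol ht.1 i).sub_const _)
      ((continuous_const.mul (Real.continuous_exp.comp
        (continuous_const.mul continuous_id))).continuousOn)
      (fun t _ => (hBder t).hasDerivWithinAt)
      (by
        rintro (i | i)
        · have := hx0lo i; have := hBpos 0; simp only [Sum.elim_inl]; linarith
        · have := hx0hi i; have := hBpos 0; simp only [Sum.elim_inr]; linarith)
      ?_
    · constructor
      · have := hbar T ⟨hT, le_refl T⟩ (Sum.inl i)
        simpa using this
      · have := hbar T ⟨hT, le_refl T⟩ (Sum.inr i)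
        simpa using this
    · -- contact condition
      intro t ht hall
      set η' := B t with hη'def
      have hη'pos : 0 < η' := hBpos t
      have hη'η : η' ≤ η := hBeta t ⟨ht.1, ht.2.le⟩
      have hylo : ∀ j, δ * xbar j - η' ≤ x t j := by
        intro j; have := hall (Sum.inl j); simp only [Sum.elim_inl] at this; linarith
      have hyhi : ∀ j, x t j ≤ 1 / c j + η' := by
        intro j; have := hall (Sum.inr j); simp only [Sum.elim_inr] at this; linarith
      have hylo2 : ∀ j, -η' ≤ x t j := by
        intro j
        have h1 := hylo j
        have h2 : 0 ≤ δ * xbar j := (mul_pos hδ0 (hxbar j).1).le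
        linarith
      have hB'eq : B' t = η' * L := by rw [hB'def, hη'def, hBdef]; ring
      rintro (i | i) hcontact
      · simp only [Sum.elim_inl] at hcontact ⊢
        have hbound := sis_inv_lo A β γ c xbar hA hβ hγ hc2 hxbar heq (x t) δ η'
          hδ0 hδh hη'pos i
          (le_trans hη'η (hηx i)) ?_ hylo (by linarith [hcontact])
        · rw [hB'eq]
          have h5 : η' * (β i * (∑ j, A i j)) ≤ η * (β i * (∑ j, A i j)) :=
            mul_le_mul_of_nonneg_right hη'η (mul_nonneg (hβ i).le (hR0 i))
          have h6 := hηρ i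
          have h7 : 0 < η' * L := mul_pos hη'pos hLpos
          calc -(sisF A β γ c (x t) i)
              ≤ -(δ * β i * (∑ j, A i j * xbar j) * ((1-δ) * xbar i))
                  + η' * (β i * (∑ j, A i j)) := hbound
            _ ≤ 0 := by linarith
            _ < η' * L := h7
        · calc η' * (∑ j, A i j) ≤ η * (∑ j, A i j) :=
              mul_le_mul_of_nonneg_right hη'η (hR0 i)
            _ ≤ δ * (∑ j, A i j * xbar j) := hηA i
      · simp only [Sum.elim_inr] at hcontact ⊢
        have hbound := sis_inv_up A β γ c hA hβ hγ hc2 (x t) η' hη'pos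
          (le_trans hη'η hη14) i hyhi hylo2 (by linarith [hcontact])
        rw [hB'eq]
        have h5 : β i * c i * (∑ j, A i j) ≤ L - 1 := hLi i
        have h6 : η' ≤ 1/4 := le_trans hη'η hη14
        have h8 : β i * c i * (∑ j, A i j) * η' * η' ≤ (L - 1) * η' * η' := by
          have := mul_nonneg hη'pos.le hη'pos.le
          nlinarith [h5]
        have h9 : (L - 1) * η' * η' ≤ (L - 1) * η' := by
          nlinarith [mul_nonneg (mul_nonneg (show (0:ℝ) ≤ L-1 by linarith) hη'pos.le)
            (show (0:ℝ) ≤ 1 - η' by linarith)]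
        calc sisF A β γ c (x t) i ≤ β i * c i * (∑ j, A i j) * η' * η' := hbound
          _ ≤ (L - 1) * η' := by linarith
          _ < η' * L := by nlinarith [hη'pos]
  -- now let ε → 0
  have hlo' : δ * xbar i - x T i ≤ 0 :=
    eps_le hexpT hε₀pos (fun ε h1 h2 => (key ε h1 h2).1)
  have hhi' : x T i - 1 / c i ≤ 0 :=
    eps_le hexpT hε₀pos (fun ε h1 h2 => (key ε h1 h2).2)
  exact ⟨by linarith, by linarith⟩


end soln

theorem stmt3 {n : ℕ} (hn : 2 ≤ n) (A : Matrix (Fin n) (Fin n) ℝ)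
    (hA : ∀ i j, 0 ≤ A i j) (hirr : MatIrreducible A)
    (β γ c : Fin n → ℝ)
    (hβ : ∀ i, 0 < β i) (hγ : ∀ i, 0 ≤ γ i) (hc : ∀ i, 1 < c i)
    (hs : 0 < specAbs (Matrix.diagonal β * A - Matrix.diagonal γ))
    (hc2 : ∀ i, 2 ≤ c i)
    (xbar : Fin n → ℝ) (hxbar : ∀ i, 0 < xbar i ∧ xbar i ≤ 1 / c i)
    (heq : ∀ i, β i * (1 - c i * xbar i) * (1 - xbar i) * (∑ j, A i j * xbar j)
      = γ i * xbar i) :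
    (∀ ε > 0, ∃ δ > 0, ∀ x : ℝ → Fin n → ℝ, IsSol A β γ c x →
      (∀ i, x 0 i ∈ Set.Ioc 0 (1 / c i)) → ‖x 0 - xbar‖ < δ →
      ∀ t : ℝ, 0 ≤ t → ‖x t - xbar‖ < ε) ∧
    (∀ x : ℝ → Fin n → ℝ, IsSol A β γ c x →
      (∀ i, x 0 i ∈ Set.Ioc 0 (1 / c i)) →
      (∀ t : ℝ, 0 ≤ t → ∀ i, x t i ∈ Set.Ioc 0 (1 / c i)) ∧
      Tendsto x atTop (𝓝 xbar)) := by
  have hne : Nonempty (Fin n) := ⟨⟨0, by omega⟩⟩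
  have hnt : Nontrivial (Fin n) := ⟨⟨0, by omega⟩, ⟨1, by omega⟩, by simp [Fin.ext_iff]⟩
  have hP : ∀ i, 0 < ∑ j, A i j * xbar j := by
    intro i
    obtain ⟨a, ha, j, hj, hpos⟩ := hirr {i} ⟨i, rfl⟩ (by
      intro h
      obtain ⟨k, hk⟩ := exists_ne i
      have : k ∈ ({i} : Set (Fin n)) := h ▸ Set.mem_univ k
      exact hk this)
    have ha' : a = i := ha
    apply Finset.sum_pos' (fun j _ => mul_nonneg (hA i j) (hxbar j).1.le)
    exact ⟨j, Finset.mem_univ j, by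
      rw [← ha']
      exact mul_pos hpos (hxbar j).1⟩
  have hxhalf : ∀ i, xbar i ≤ 1/2 := by
    intro i
    have hci : (0:ℝ) < c i := lt_of_lt_of_le (by norm_num) (hc2 i)
    have h := (hxbar i).2
    rw [le_div_iff₀ hci] at h
    nlinarith [hc2 i, (hxbar i).1]
  -- per-solution construction of δ
  have sol_delta : ∀ x : ℝ → Fin n → ℝ, (∀ i, x 0 i ∈ Set.Ioc 0 (1 / c i)) →
      ∃ δ, 0 < δ ∧ δ ≤ 1/2 ∧ ∀ i, δ * xbar i ≤ x 0 i := by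
    intro x hx0
    have hq : ∀ i, 0 < x 0 i / xbar i := fun i => div_pos (hx0 i).1 (hxbar i).1
    have hk := fun i => kappa_le (q := fun j => x 0 j / xbar j) hq i
    refine ⟨min (1/2) (1 / ((∑ j, 1 / (x 0 j / xbar j)) + 1)),
      lt_min (by norm_num) (hk ⟨0, by omega⟩).2, min_le_left _ _, ?_⟩
    intro i
    have h1 : min (1/2) (1 / ((∑ j, 1 / (x 0 j / xbar j)) + 1)) ≤ x 0 i / xbar i :=
      le_trans (min_le_right _ _) (hk i).1
    rw [le_div_iff₀ (hxbar i).1] at h1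
    linarith
  constructor
  · -- stability
    intro ε hε
    set ε3 : ℝ := min ε 1 / 2 with hε3def
    have hε3pos : 0 < ε3 := by
      rw [hε3def]; have := lt_min hε one_pos; positivity
    have hε3half : ε3 ≤ 1/2 := by
      rw [hε3def]
      have : min ε 1 ≤ 1 := min_le_right _ _
      linarith
    have hε3ε : ε3 ≤ ε / 2 := by
      rw [hε3def]
      have : min ε 1 ≤ ε := min_le_left _ _
      linarith
    have hkx := fun i => kappa_le (q := xbar) (fun i => (hxbar i).1) i
    set κx : ℝ := 1 / ((∑ j, 1 / xbar j) + 1) with hκxdef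
    have hκxpos : 0 < κx := (hkx ⟨0, by omega⟩).2
    have hκxle : ∀ i, κx ≤ xbar i := fun i => (hkx i).1
    refine ⟨ε3 * κx, mul_pos hε3pos hκxpos, ?_⟩
    intro x hsol hx0 hnorm t ht
    obtain ⟨δ, hδ0, hδh, hx0lo⟩ := sol_delta x hx0
    have hinv := invariance hn hA hβ hγ hc2 hxbar heq hP hsol δ hδ0 hδh hx0lo
      (fun i => (hx0 i).2)
    have hbnd : ∀ i, |x 0 i - xbar i| ≤ ε3 * xbar i := by
      intro i
      have h1 : ‖(x 0 - xbar) i‖ ≤ ‖x 0 - xbar‖ := norm_le_pi_norm _ i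
      rw [Pi.sub_apply, Real.norm_eq_abs] at h1
      have h2 : ε3 * κx ≤ ε3 * xbar i := mul_le_mul_of_nonneg_left (hκxle i) hε3pos.le
      linarith
    have hup := upper_const hA hβ hc2 hxbar heq hP hsol hδ0 hinv (1 + ε3)
      (by linarith) 0 le_rfl (fun i => by
        have := abs_le.1 (hbnd i)
        nlinarith [this.2])
    have hlo := lower_const hA hβ hc2 hxbar heq hP hsol (1 - ε3)
      (by linarith) (by linarith) 0 le_rfl (fun i => by
        have := abs_le.1 (hbnd i)
        nlinarith [this.1])
    have h1 := hup t ht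
    have h2 := hlo t ht
    rw [pi_norm_lt_iff hε]
    intro i
    rw [Pi.sub_apply, Real.norm_eq_abs, abs_lt]
    have h3 := h1 i
    have h4 := h2 i
    have h5 : ε3 * xbar i ≤ ε3 * (1/2) := mul_le_mul_of_nonneg_left (hxhalf i) hε3pos.le
    constructor <;> nlinarith
  · -- attraction
    intro x hsol hx0
    obtain ⟨δ, hδ0, hδh, hx0lo⟩ := sol_delta x hx0
    have hinv := invariance hn hA hβ hγ hc2 hxbar heq hP hsol δ hδ0 hδh hx0lo
      (fun i => (hx0 i).2)
    refine ⟨fun t ht i => ⟨lt_of_lt_of_le (mul_pos hδ0 (hxbar i).1) (hinv t ht i).1,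
      (hinv t ht i).2⟩, ?_⟩
    rw [Metric.tendsto_atTop]
    intro ε hε
    set ε2 : ℝ := min (ε/2) (1/4) with hε2def
    have hε2pos : 0 < ε2 := lt_min (by linarith) (by norm_num)
    have hε214 : ε2 ≤ 1/4 := min_le_right _ _
    have hε2ε : ε2 ≤ ε/2 := min_le_left _ _
    obtain ⟨T1, hT1, hxT1⟩ := upper_decay hn hA hβ hc2 hxbar heq hP hsol hδ0 hinv
      ε2 hε2pos hε214
    have hup := upper_const hA hβ hc2 hxbar heq hP hsol hδ0 hinv (1 + ε2)
      (by linarith) T1 hT1 hxT1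
    obtain ⟨T2, hT2, hxT2⟩ := lower_decay hn hA hβ hc2 hxbar heq hP hsol hδ0 hδh hinv
      ε2 hε2pos hε214
    have hlo := lower_const hA hβ hc2 hxbar heq hP hsol (1 - ε2)
      (by linarith) (by linarith) T2 hT2 hxT2
    refine ⟨max T1 T2, fun t htm => ?_⟩
    rw [dist_pi_lt_iff hε]
    intro i
    rw [Real.dist_eq]
    have h3 := hup t (le_trans (le_max_left _ _) htm) i
    have h4 := hlo t (le_trans (le_max_right _ _) htm) i
    have h5 : ε2 * xbar i ≤ ε2 * (1/2) := mul_le_mul_of_nonneg_left (hxhalf i) hε2pos.le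
    rw [abs_lt]
    constructor <;> nlinarith
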